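/- The axiom system E_v is ground complete for verdict equivalence: for all closed monitors m and n, if m ≃ n then E_v ⊢ m = n. -/

import Mathlib

/-- Recursion-free regular monitors (with variables). -/
inductive Mon (Act : Type) : Type
  | end_ : Mon Act
  | yes : Mon Act
  | no : Mon Act
  | act : Act → Mon Act → Mon Act
  | plus : Mon Act → Mon Act → Mon Act
  | var : ℕ → Mon Act

variable {Act : Type}

/-- Verdicts: `end`, `yes`, `no`. -/
inductive IsVerdict : Mon Act → Prop
  | end_ : IsVerdict Mon.end_
  | yes : IsVerdict Mon.yes
  | no : IsVerdict Mon.no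

/-- Labelled transition relation; `none` is the silent action τ. -/
inductive Step : Mon Act → Option Act → Mon Act → Prop
  | act (a : Act) (m : Mon Act) : Step (Mon.act a m) (some a) m
  | plusL {m n m' : Mon Act} {α : Option Act} : Step m α m' → Step (Mon.plus m n) α m'
  | plusR {m n n' : Mon Act} {α : Option Act} : Step n α n' → Step (Mon.plus m n) α n'
  | verdict {v : Mon Act} {α : Option Act} : IsVerdict v → Step v α v

/-- Reflexive-transitive closure of τ-steps. -/
def TauStar (m n : Mon Act) : Prop :=
  Relation.ReflTransGen (fun p q => Step p none q) m n

/-- Strong transition along a finite trace. -/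
inductive Trace : Mon Act → List Act → Mon Act → Prop
  | refl (m : Mon Act) : Trace m [] m
  | cons {m m' m'' : Mon Act} {a : Act} {s : List Act} :
      Step m (some a) m' → Trace m' s m'' → Trace m (a :: s) m''

/-- Weak transition along a finite trace (τ-steps allowed throughout). -/
inductive WTrace : Mon Act → List Act → Mon Act → Prop
  | nil {m m' : Mon Act} : TauStar m m' → WTrace m [] m'
  | cons {m m₁ m₂ m' : Mon Act} {a : Act} {s : List Act} :
      TauStar m m₁ → Step m₁ (some a) m₂ → WTrace m₂ s m' → WTrace m (a :: s) m'

/-- Acceptance language. -/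
def La (m : Mon Act) : Set (List Act) := {s | WTrace m s Mon.yes}

/-- Rejection language. -/
def Lr (m : Mon Act) : Set (List Act) := {s | WTrace m s Mon.no}

/-- Verdict equivalence. -/
def VerdEq (m n : Mon Act) : Prop := La m = La n ∧ Lr m = Lr n

/-- `A · Act^ω`: infinite words having a finite prefix in `A`. -/
def omegaCl (A : Set (List Act)) : Set (ℕ → Act) :=
  {w | ∃ n : ℕ, (List.range n).map w ∈ A}

/-- ω-verdict equivalence. -/
def OmegaEq (m n : Mon Act) : Prop :=
  omegaCl (La m) = omegaCl (La n) ∧ omegaCl (Lr m) = omegaCl (Lr n)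

/-- Closed monitors: no variables. -/
def Closed : Mon Act → Prop
  | Mon.act _ m => Closed m
  | Mon.plus m n => Closed m ∧ Closed n
  | Mon.var _ => False
  | _ => True

/-- `yes` occurs as a subterm. -/
def HasYes : Mon Act → Prop
  | Mon.yes => True
  | Mon.act _ m => HasYes m
  | Mon.plus m n => HasYes m ∨ HasYes n
  | _ => False

/-- `no` occurs as a subterm. -/
def HasNo : Mon Act → Prop
  | Mon.no => True
  | Mon.act _ m => HasNo m
  | Mon.plus m n => HasNo m ∨ HasNo n
  | _ => False

/-- Syntactic depth. -/
def depth : Mon Act → ℕ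
  | Mon.act _ m => depth m + 1
  | Mon.plus m n => max (depth m) (depth n)
  | _ => 0

/-- Applying a substitution. -/
def msubst (σ : ℕ → Mon Act) : Mon Act → Mon Act
  | Mon.var x => σ x
  | Mon.act a m => Mon.act a (msubst σ m)
  | Mon.plus m n => Mon.plus (msubst σ m) (msubst σ n)
  | m => m

/-- Equational derivability from an axiom set `E`. -/
inductive Deriv (E : Mon Act → Mon Act → Prop) : Mon Act → Mon Act → Prop
  | ax {m n} : E m n → Deriv E m n
  | refl (m) : Deriv E m m
  | symm {m n} : Deriv E m n → Deriv E n m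
  | trans {m n p} : Deriv E m n → Deriv E n p → Deriv E m p
  | act (a : Act) {m n} : Deriv E m n → Deriv E (Mon.act a m) (Mon.act a n)
  | plus {m m' n n'} : Deriv E m m' → Deriv E n n' → Deriv E (Mon.plus m n) (Mon.plus m' n')
  | subst (σ : ℕ → Mon Act) {m n} : Deriv E m n → Deriv E (msubst σ m) (msubst σ n)

def vx : Mon Act := Mon.var 0
def vy : Mon Act := Mon.var 1
def vz : Mon Act := Mon.var 2

/-- The axiom system `E_v`. -/
inductive EvAx : Mon Act → Mon Act → Prop
  | A1 : EvAx (Mon.plus vx vy) (Mon.plus vy vx)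
  | A2 : EvAx (Mon.plus vx (Mon.plus vy vz)) (Mon.plus (Mon.plus vx vy) vz)
  | A3 : EvAx (Mon.plus vx vx) vx
  | A4 : EvAx (Mon.plus vx Mon.end_) vx
  | Ea (a : Act) : EvAx (Mon.act a Mon.end_) Mon.end_
  | Ya (a : Act) : EvAx Mon.yes (Mon.plus Mon.yes (Mon.act a Mon.yes))
  | Na (a : Act) : EvAx Mon.no (Mon.plus Mon.no (Mon.act a Mon.no))
  | Da (a : Act) : EvAx (Mon.act a (Mon.plus vx vy)) (Mon.plus (Mon.act a vx) (Mon.act a vy))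

/-- Sum of a list of monitors (`end` for the empty sum). -/
def sumList : List (Mon Act) → Mon Act
  | [] => Mon.end_
  | [m] => m
  | m :: ms => Mon.plus m (sumList ms)

/-- `s.m`: the monitor performing exactly the actions of `s` and then behaving as `m`. -/
def prefixMon (s : List Act) (m : Mon Act) : Mon Act :=
  List.foldr Mon.act m s

/-- Build `Σ_{(a,m)∈l} a.m [+ yes] [+ no]`. -/
def buildNF (l : List (Act × Mon Act)) (hy hn : Bool) : Mon Act :=
  sumList (l.map (fun p => Mon.act p.1 p.2) ++
    (if hy then [Mon.yes] else []) ++ (if hn then [Mon.no] else []))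

/-- Normal forms for closed monitors. -/
inductive NF : Mon Act → Prop
  | mk (l : List (Act × Mon Act)) (hy hn : Bool) :
      (l.map Prod.fst).Nodup →
      (∀ p ∈ l, p.2 ≠ Mon.end_) →
      (∀ p ∈ l, NF p.2) →
      NF (buildNF l hy hn)

/-- Build `Σ_{(a,m)∈l} a.m + Σ_{x∈vs} x [+ yes] [+ no]`. -/
def buildONF (l : List (Act × Mon Act)) (vs : List ℕ) (hy hn : Bool) : Mon Act :=
  sumList (l.map (fun p => Mon.act p.1 p.2) ++ vs.map Mon.var ++
    (if hy then [Mon.yes] else []) ++ (if hn then [Mon.no] else []))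

/-- Open normal forms. -/
inductive ONF : Mon Act → Prop
  | mk (l : List (Act × Mon Act)) (vs : List ℕ) (hy hn : Bool) :
      (l.map Prod.fst).Nodup → vs.Nodup →
      (∀ p ∈ l, p.2 ≠ Mon.end_) →
      (∀ p ∈ l, ONF p.2) →
      ONF (buildONF l vs hy hn)

/-- `s^i`: the `i`-fold concatenation of `s`. -/
def spow (s : List Act) (i : ℕ) : List Act := (List.replicate i s).flatten

/-- All traces of length exactly `n` over the alphabet listed by `L`. -/
def tuples (L : List Act) : ℕ → List (List Act)
  | 0 => [[]]
  | n + 1 => (tuples L n).flatMap (fun t => L.map (fun a => a :: t))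

/-- All traces of length at most `n`. -/
def allUpTo (L : List Act) (n : ℕ) : List (List Act) :=
  (List.range (n + 1)).flatMap (tuples L)

/-- `s̄^≤(m)`: sum of `s'.m` over traces `s'` with `|s'| ≤ |s|` that are not prefixes of `s`. -/
def sbarLe [DecidableEq Act] (L : List Act) (s : List Act) (m : Mon Act) : Mon Act :=
  sumList (((allUpTo L s.length).filter (fun t => !(t.isPrefixOf s))).map
    (fun t => prefixMon t m))

/-- `s̄(m) = s̄^≤(m) + s.Σ_{a∈Act} a.m`. -/
def sbar [DecidableEq Act] (L : List Act) (s : List Act) (m : Mon Act) : Mon Act :=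
  Mon.plus (sbarLe L s m) (prefixMon s (sumList (L.map fun a => Mon.act a m)))

/-- `s̄^(k)(m)`. -/
def sbarK [DecidableEq Act] (L : List Act) (s : List Act) (m : Mon Act) : ℕ → Mon Act
  | 0 => sbar L s m
  | 1 => sbar L s m
  | k + 2 =>
      Mon.plus
        (sumList ((List.range k).map (fun i => prefixMon (spow s (i + 1)) (sbarLe L s m))))
        (prefixMon (spow s (k + 1)) (sbar L s m))


/-! ### Auxiliary development for stmt14 -/

section Stmt14Aux

/-! #### Step inversion lemmas -/

lemma step_verdict_fix {v : Mon Act} (hv : IsVerdict v) {α p} (h : Step v α p) : p = v := by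
  cases h with
  | act _ _ => cases hv
  | plusL h => cases hv
  | plusR h => cases hv
  | verdict _ => rfl

lemma step_act_inv {a : Act} {m : Mon Act} {α p} (h : Step (Mon.act a m) α p) :
    α = some a ∧ p = m := by
  cases h with
  | act _ _ => exact ⟨rfl, rfl⟩
  | verdict hv => cases hv

lemma step_plus_inv {m n : Mon Act} {α p} (h : Step (Mon.plus m n) α p) :
    Step m α p ∨ Step n α p := by
  cases h with
  | plusL h => exact Or.inl h
  | plusR h => exact Or.inr h
  | verdict hv => cases hv

/-! #### TauStar and WTrace lemmas -/

lemma taustar_fix {m : Mon Act} (hf : ∀ p, Step m none p → p = m) {q} (h : TauStar m q) :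
    q = m := by
  induction h with
  | refl => rfl
  | tail h1 h2 ih => subst ih; exact hf _ h2

lemma wtrace_nil_inv {m q : Mon Act} (h : WTrace m [] q) : TauStar m q := by
  cases h with
  | nil h => exact h

lemma wtrace_cons_inv {m q : Mon Act} {a : Act} {s : List Act} (h : WTrace m (a :: s) q) :
    ∃ m₁ m₂, TauStar m m₁ ∧ Step m₁ (some a) m₂ ∧ WTrace m₂ s q := by
  cases h with
  | cons h1 h2 h3 => exact ⟨_, _, h1, h2, h3⟩

lemma wtrace_fix {m : Mon Act} (hf : ∀ α p, Step m α p → p = m) :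
    ∀ {s : List Act} {q}, WTrace m s q → q = m := by
  intro s
  induction s with
  | nil =>
    intro q h
    exact taustar_fix (fun p hp => hf _ _ hp) (wtrace_nil_inv h)
  | cons a s ih =>
    intro q h
    obtain ⟨m₁, m₂, h1, h2, h3⟩ := wtrace_cons_inv h
    have e1 : m₁ = m := taustar_fix (fun p hp => hf _ _ hp) h1
    rw [e1] at h2
    have e2 : m₂ = m := hf _ _ h2
    rw [e2] at h3
    exact ih h3

lemma wtrace_verdict_fix {v : Mon Act} (hv : IsVerdict v) {s : List Act} {q}
    (h : WTrace v s q) : q = v :=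
  wtrace_fix (fun _ _ hp => step_verdict_fix hv hp) h

/-! #### Languages of basic monitors -/

lemma La_yes : La (Mon.yes : Mon Act) = Set.univ := by
  ext s
  simp only [Set.mem_univ, iff_true, La, Set.mem_setOf_eq]
  induction s with
  | nil => exact WTrace.nil Relation.ReflTransGen.refl
  | cons a s ih => exact WTrace.cons Relation.ReflTransGen.refl (Step.verdict IsVerdict.yes) ih

lemma Lr_no : Lr (Mon.no : Mon Act) = Set.univ := by
  ext s
  simp only [Set.mem_univ, iff_true, Lr, Set.mem_setOf_eq]
  induction s with
  | nil => exact WTrace.nil Relation.ReflTransGen.refl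
  | cons a s ih => exact WTrace.cons Relation.ReflTransGen.refl (Step.verdict IsVerdict.no) ih

lemma Lr_yes : Lr (Mon.yes : Mon Act) = ∅ := by
  ext s
  simp only [Set.mem_empty_iff_false, iff_false, Lr, Set.mem_setOf_eq]
  intro h
  exact nomatch (wtrace_verdict_fix IsVerdict.yes h)

lemma La_no : La (Mon.no : Mon Act) = ∅ := by
  ext s
  simp only [Set.mem_empty_iff_false, iff_false, La, Set.mem_setOf_eq]
  intro h
  exact nomatch (wtrace_verdict_fix IsVerdict.no h)

lemma La_end : La (Mon.end_ : Mon Act) = ∅ := by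
  ext s
  simp only [Set.mem_empty_iff_false, iff_false, La, Set.mem_setOf_eq]
  intro h
  exact nomatch (wtrace_verdict_fix IsVerdict.end_ h)

lemma Lr_end : Lr (Mon.end_ : Mon Act) = ∅ := by
  ext s
  simp only [Set.mem_empty_iff_false, iff_false, Lr, Set.mem_setOf_eq]
  intro h
  exact nomatch (wtrace_verdict_fix IsVerdict.end_ h)

/-! #### Languages of `act` -/

lemma taustar_act {a : Act} {m p : Mon Act} (h : TauStar (Mon.act a m) p) :
    p = Mon.act a m := by
  induction h with
  | refl => rfl
  | tail h1 h2 ih =>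
    subst ih
    exact absurd (step_act_inv h2).1 (by simp)

lemma wtrace_act_iff {a : Act} {m q : Mon Act} (hq : q ≠ Mon.act a m) {s : List Act} :
    WTrace (Mon.act a m) s q ↔ ∃ t, s = a :: t ∧ WTrace m t q := by
  constructor
  · intro h
    cases h with
    | nil h1 => exact absurd (taustar_act h1) hq
    | cons h1 h2 h3 =>
      have e := taustar_act h1
      subst e
      obtain ⟨he, hm⟩ := step_act_inv h2
      subst hm
      injection he with he'
      subst he'
      exact ⟨_, rfl, h3⟩
  · rintro ⟨t, rfl, h⟩
    exact WTrace.cons Relation.ReflTransGen.refl (Step.act a m) h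

lemma La_act {a : Act} {m : Mon Act} :
    La (Mon.act a m) = {s | ∃ t, t ∈ La m ∧ s = a :: t} := by
  ext s
  simp only [La, Set.mem_setOf_eq]
  rw [wtrace_act_iff (q := Mon.yes) (fun h => nomatch h)]
  constructor
  · rintro ⟨t, rfl, h⟩; exact ⟨t, h, rfl⟩
  · rintro ⟨t, h, rfl⟩; exact ⟨t, rfl, h⟩

lemma Lr_act {a : Act} {m : Mon Act} :
    Lr (Mon.act a m) = {s | ∃ t, t ∈ Lr m ∧ s = a :: t} := by
  ext s
  simp only [Lr, Set.mem_setOf_eq]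
  rw [wtrace_act_iff (q := Mon.no) (fun h => nomatch h)]
  constructor
  · rintro ⟨t, rfl, h⟩; exact ⟨t, h, rfl⟩
  · rintro ⟨t, h, rfl⟩; exact ⟨t, rfl, h⟩

/-! #### Languages of `plus` -/

lemma taustar_plus {m n p : Mon Act} (h : TauStar (Mon.plus m n) p) :
    p = Mon.plus m n ∨ TauStar m p ∨ TauStar n p := by
  rcases Relation.ReflTransGen.cases_head h with he | ⟨c, hc, hcp⟩
  · exact Or.inl he.symm
  · rcases step_plus_inv hc with h' | h'
    · exact Or.inr (Or.inl (Relation.ReflTransGen.head h' hcp))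
    · exact Or.inr (Or.inr (Relation.ReflTransGen.head h' hcp))

lemma wtrace_plus_inv {m n q : Mon Act} (hq : q ≠ Mon.plus m n) {s : List Act}
    (h : WTrace (Mon.plus m n) s q) : WTrace m s q ∨ WTrace n s q := by
  cases h with
  | nil h1 =>
    rcases taustar_plus h1 with he | h' | h'
    · exact absurd he hq
    · exact Or.inl (WTrace.nil h')
    · exact Or.inr (WTrace.nil h')
  | cons h1 h2 h3 =>
    rcases taustar_plus h1 with he | h' | h'
    · subst he
      rcases step_plus_inv h2 with h'' | h''
      · exact Or.inl (WTrace.cons Relation.ReflTransGen.refl h'' h3)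
      · exact Or.inr (WTrace.cons Relation.ReflTransGen.refl h'' h3)
    · exact Or.inl (WTrace.cons h' h2 h3)
    · exact Or.inr (WTrace.cons h' h2 h3)

lemma wtrace_plusL {m n q : Mon Act} (hv : IsVerdict q) {s : List Act}
    (h : WTrace m s q) : WTrace (Mon.plus m n) s q := by
  cases h with
  | nil h1 =>
    rcases Relation.ReflTransGen.cases_head h1 with he | ⟨c, hc, hcp⟩
    · subst he
      exact WTrace.nil (Relation.ReflTransGen.single (Step.plusL (Step.verdict hv)))
    · exact WTrace.nil (Relation.ReflTransGen.head (Step.plusL hc) hcp)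
  | cons h1 h2 h3 =>
    rcases Relation.ReflTransGen.cases_head h1 with he | ⟨c, hc, hcp⟩
    · subst he
      exact WTrace.cons Relation.ReflTransGen.refl (Step.plusL h2) h3
    · exact WTrace.cons (Relation.ReflTransGen.head (Step.plusL hc) hcp) h2 h3

lemma wtrace_plusR {m n q : Mon Act} (hv : IsVerdict q) {s : List Act}
    (h : WTrace n s q) : WTrace (Mon.plus m n) s q := by
  cases h with
  | nil h1 =>
    rcases Relation.ReflTransGen.cases_head h1 with he | ⟨c, hc, hcp⟩
    · subst he
      exact WTrace.nil (Relation.ReflTransGen.single (Step.plusR (Step.verdict hv)))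
    · exact WTrace.nil (Relation.ReflTransGen.head (Step.plusR hc) hcp)
  | cons h1 h2 h3 =>
    rcases Relation.ReflTransGen.cases_head h1 with he | ⟨c, hc, hcp⟩
    · subst he
      exact WTrace.cons Relation.ReflTransGen.refl (Step.plusR h2) h3
    · exact WTrace.cons (Relation.ReflTransGen.head (Step.plusR hc) hcp) h2 h3

lemma La_plus {m n : Mon Act} : La (Mon.plus m n) = La m ∪ La n := by
  ext s
  constructor
  · intro h
    exact wtrace_plus_inv (q := Mon.yes) (fun he => nomatch he) h
  · rintro (h | h)
    · exact wtrace_plusL IsVerdict.yes h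
    · exact wtrace_plusR IsVerdict.yes h

lemma Lr_plus {m n : Mon Act} : Lr (Mon.plus m n) = Lr m ∪ Lr n := by
  ext s
  constructor
  · intro h
    exact wtrace_plus_inv (q := Mon.no) (fun he => nomatch he) h
  · rintro (h | h)
    · exact wtrace_plusL IsVerdict.no h
    · exact wtrace_plusR IsVerdict.no h

/-! #### prefixMon and sumList languages -/

lemma prefixMon_cons {a : Act} {s : List Act} {m : Mon Act} :
    prefixMon (a :: s) m = Mon.act a (prefixMon s m) := rfl

lemma prefixMon_append {s t : List Act} {m : Mon Act} :
    prefixMon (s ++ t) m = prefixMon s (prefixMon t m) := by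
  simp [prefixMon, List.foldr_append]

lemma La_prefixMon {s : List Act} {m : Mon Act} :
    La (prefixMon s m) = {u | ∃ t, t ∈ La m ∧ u = s ++ t} := by
  induction s with
  | nil => ext u; simp [prefixMon]
  | cons a s ih =>
    rw [prefixMon_cons, La_act, ih]
    ext u
    simp only [Set.mem_setOf_eq]
    constructor
    · rintro ⟨t, ⟨t', ht', rfl⟩, rfl⟩; exact ⟨t', ht', rfl⟩
    · rintro ⟨t', ht', rfl⟩; exact ⟨s ++ t', ⟨t', ht', rfl⟩, rfl⟩

lemma Lr_prefixMon {s : List Act} {m : Mon Act} :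
    Lr (prefixMon s m) = {u | ∃ t, t ∈ Lr m ∧ u = s ++ t} := by
  induction s with
  | nil => ext u; simp [prefixMon]
  | cons a s ih =>
    rw [prefixMon_cons, Lr_act, ih]
    ext u
    simp only [Set.mem_setOf_eq]
    constructor
    · rintro ⟨t, ⟨t', ht', rfl⟩, rfl⟩; exact ⟨t', ht', rfl⟩
    · rintro ⟨t', ht', rfl⟩; exact ⟨s ++ t', ⟨t', ht', rfl⟩, rfl⟩

lemma La_sumList (l : List (Mon Act)) :
    La (sumList l) = {u | ∃ x ∈ l, u ∈ La x} := by
  induction l with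
  | nil => ext u; simp [sumList, La_end]
  | cons x l ih =>
    cases l with
    | nil => ext u; simp [sumList]
    | cons y l' =>
      rw [show sumList (x :: y :: l') = Mon.plus x (sumList (y :: l')) from rfl, La_plus, ih]
      ext u
      simp only [Set.mem_union, Set.mem_setOf_eq, List.mem_cons]
      constructor
      · rintro (h | ⟨z, hz, h⟩)
        · exact ⟨x, Or.inl rfl, h⟩
        · exact ⟨z, Or.inr hz, h⟩
      · rintro ⟨z, rfl | hz, h⟩
        · exact Or.inl h
        · exact Or.inr ⟨z, hz, h⟩

lemma Lr_sumList (l : List (Mon Act)) :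
    Lr (sumList l) = {u | ∃ x ∈ l, u ∈ Lr x} := by
  induction l with
  | nil => ext u; simp [sumList, Lr_end]
  | cons x l ih =>
    cases l with
    | nil => ext u; simp [sumList]
    | cons y l' =>
      rw [show sumList (x :: y :: l') = Mon.plus x (sumList (y :: l')) from rfl, Lr_plus, ih]
      ext u
      simp only [Set.mem_union, Set.mem_setOf_eq, List.mem_cons]
      constructor
      · rintro (h | ⟨z, hz, h⟩)
        · exact ⟨x, Or.inl rfl, h⟩
        · exact ⟨z, Or.inr hz, h⟩
      · rintro ⟨z, rfl | hz, h⟩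
        · exact Or.inl h
        · exact Or.inr ⟨z, hz, h⟩

/-! #### Soundness of `E_v` -/

lemma msubst_id (m : Mon Act) : msubst Mon.var m = m := by
  induction m <;> simp [msubst, *]

lemma msubst_comp (σ τ : ℕ → Mon Act) (m : Mon Act) :
    msubst σ (msubst τ m) = msubst (fun x => msubst σ (τ x)) m := by
  induction m <;> simp [msubst, *]

theorem deriv_sound_subst {m n : Mon Act} (h : Deriv EvAx m n) :
    ∀ σ : ℕ → Mon Act, VerdEq (msubst σ m) (msubst σ n) := by
  induction h with
  | ax ha =>
    intro σ
    cases ha with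
    | A1 =>
      refine ⟨?_, ?_⟩ <;> simp only [msubst, vx, vy]
      · rw [La_plus, La_plus]; exact Set.union_comm _ _
      · rw [Lr_plus, Lr_plus]; exact Set.union_comm _ _
    | A2 =>
      refine ⟨?_, ?_⟩ <;> simp only [msubst, vx, vy, vz]
      · rw [La_plus, La_plus, La_plus, La_plus]; exact (Set.union_assoc _ _ _).symm
      · rw [Lr_plus, Lr_plus, Lr_plus, Lr_plus]; exact (Set.union_assoc _ _ _).symm
    | A3 =>
      refine ⟨?_, ?_⟩ <;> simp only [msubst, vx]
      · rw [La_plus]; exact Set.union_self _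
      · rw [Lr_plus]; exact Set.union_self _
    | A4 =>
      refine ⟨?_, ?_⟩ <;> simp only [msubst, vx]
      · rw [La_plus, La_end]; exact Set.union_empty _
      · rw [Lr_plus, Lr_end]; exact Set.union_empty _
    | Ea a =>
      refine ⟨?_, ?_⟩ <;> simp only [msubst]
      · rw [La_act, La_end]; ext u; simp
      · rw [Lr_act, Lr_end]; ext u; simp
    | Ya a =>
      refine ⟨?_, ?_⟩ <;> simp only [msubst]
      · rw [La_plus, La_act, La_yes]; ext u; simp
      · rw [Lr_plus, Lr_act, Lr_yes]; ext u; simp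
    | Na a =>
      refine ⟨?_, ?_⟩ <;> simp only [msubst]
      · rw [La_plus, La_act, La_no]; ext u; simp
      · rw [Lr_plus, Lr_act, Lr_no]; ext u; simp
    | Da a =>
      refine ⟨?_, ?_⟩ <;> simp only [msubst, vx, vy]
      · rw [La_act, La_plus, La_plus, La_act, La_act]
        ext u
        simp only [Set.mem_setOf_eq, Set.mem_union]
        constructor
        · rintro ⟨t, ht | ht, rfl⟩
          · exact Or.inl ⟨t, ht, rfl⟩
          · exact Or.inr ⟨t, ht, rfl⟩
        · rintro (⟨t, ht, rfl⟩ | ⟨t, ht, rfl⟩)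
          · exact ⟨t, Or.inl ht, rfl⟩
          · exact ⟨t, Or.inr ht, rfl⟩
      · rw [Lr_act, Lr_plus, Lr_plus, Lr_act, Lr_act]
        ext u
        simp only [Set.mem_setOf_eq, Set.mem_union]
        constructor
        · rintro ⟨t, ht | ht, rfl⟩
          · exact Or.inl ⟨t, ht, rfl⟩
          · exact Or.inr ⟨t, ht, rfl⟩
        · rintro (⟨t, ht, rfl⟩ | ⟨t, ht, rfl⟩)
          · exact ⟨t, Or.inl ht, rfl⟩
          · exact ⟨t, Or.inr ht, rfl⟩
  | refl m => intro σ; exact ⟨rfl, rfl⟩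
  | symm _ ih => intro σ; exact ⟨(ih σ).1.symm, (ih σ).2.symm⟩
  | trans _ _ ih1 ih2 =>
    intro σ
    exact ⟨(ih1 σ).1.trans (ih2 σ).1, (ih1 σ).2.trans (ih2 σ).2⟩
  | act a _ ih =>
    intro σ
    refine ⟨?_, ?_⟩ <;> simp only [msubst]
    · rw [La_act, La_act, (ih σ).1]
    · rw [Lr_act, Lr_act, (ih σ).2]
  | plus _ _ ih1 ih2 =>
    intro σ
    refine ⟨?_, ?_⟩ <;> simp only [msubst]
    · rw [La_plus, La_plus, (ih1 σ).1, (ih2 σ).1]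
    · rw [Lr_plus, Lr_plus, (ih1 σ).2, (ih2 σ).2]
  | subst τ _ ih =>
    intro σ
    rw [msubst_comp, msubst_comp]
    exact ih _

theorem deriv_sound {m n : Mon Act} (h : Deriv EvAx m n) : VerdEq m n := by
  have := deriv_sound_subst h Mon.var
  rwa [msubst_id, msubst_id] at this

/-! #### Derivation helpers -/

lemma dComm (m n : Mon Act) : Deriv EvAx (Mon.plus m n) (Mon.plus n m) := by
  have h := Deriv.subst (fun k => if k = 0 then m else n) (Deriv.ax (E := EvAx) EvAx.A1)
  simpa [msubst, vx, vy] using h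

lemma dAssoc (m n p : Mon Act) :
    Deriv EvAx (Mon.plus m (Mon.plus n p)) (Mon.plus (Mon.plus m n) p) := by
  have h := Deriv.subst (fun k => if k = 0 then m else if k = 1 then n else p)
    (Deriv.ax (E := EvAx) EvAx.A2)
  simpa [msubst, vx, vy, vz] using h

lemma dIdem (m : Mon Act) : Deriv EvAx (Mon.plus m m) m := by
  have h := Deriv.subst (fun _ => m) (Deriv.ax (E := EvAx) EvAx.A3)
  simpa [msubst, vx] using h

lemma dUnitR (m : Mon Act) : Deriv EvAx (Mon.plus m Mon.end_) m := by
  have h := Deriv.subst (fun _ => m) (Deriv.ax (E := EvAx) EvAx.A4)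
  simpa [msubst, vx] using h

lemma dUnitL (m : Mon Act) : Deriv EvAx (Mon.plus Mon.end_ m) m :=
  (dComm _ _).trans (dUnitR m)

lemma dDa (a : Act) (m n : Mon Act) :
    Deriv EvAx (Mon.act a (Mon.plus m n)) (Mon.plus (Mon.act a m) (Mon.act a n)) := by
  have h := Deriv.subst (fun k => if k = 0 then m else n) (Deriv.ax (E := EvAx) (EvAx.Da a))
  simpa [msubst, vx, vy] using h

lemma sum_cons (x : Mon Act) (l : List (Mon Act)) :
    Deriv EvAx (sumList (x :: l)) (Mon.plus x (sumList l)) := by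
  cases l with
  | nil => exact Deriv.symm (dUnitR x)
  | cons y l => exact Deriv.refl _

lemma sum_append (l₁ l₂ : List (Mon Act)) :
    Deriv EvAx (sumList (l₁ ++ l₂)) (Mon.plus (sumList l₁) (sumList l₂)) := by
  induction l₁ with
  | nil => exact Deriv.symm (dUnitL _)
  | cons x l ih =>
    refine Deriv.trans (sum_cons x (l ++ l₂)) ?_
    refine Deriv.trans (Deriv.plus (Deriv.refl x) ih) ?_
    refine Deriv.trans (dAssoc x (sumList l) (sumList l₂)) ?_
    exact Deriv.plus (Deriv.symm (sum_cons x l)) (Deriv.refl _)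

lemma sum_swap (l₁ l₂ : List (Mon Act)) :
    Deriv EvAx (sumList (l₁ ++ l₂)) (sumList (l₂ ++ l₁)) :=
  ((sum_append l₁ l₂).trans (dComm _ _)).trans (sum_append l₂ l₁).symm

lemma act_sum (a : Act) (l : List (Mon Act)) :
    Deriv EvAx (Mon.act a (sumList l)) (sumList (l.map (Mon.act a))) := by
  induction l with
  | nil => exact Deriv.ax (EvAx.Ea a)
  | cons x l ih =>
    cases l with
    | nil => exact Deriv.refl _
    | cons y l' =>
      exact (dDa a x (sumList (y :: l'))).trans (Deriv.plus (Deriv.refl _) ih)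

lemma prefix_cong (s : List Act) {m n : Mon Act} (h : Deriv EvAx m n) :
    Deriv EvAx (prefixMon s m) (prefixMon s n) := by
  induction s with
  | nil => exact h
  | cons a s ih => exact Deriv.act a ih

lemma prefix_plus (s : List Act) (x y : Mon Act) :
    Deriv EvAx (prefixMon s (Mon.plus x y)) (Mon.plus (prefixMon s x) (prefixMon s y)) := by
  induction s with
  | nil => exact Deriv.refl _
  | cons a s ih => exact (Deriv.act a ih).trans (dDa a _ _)

lemma v_absorb {v : Mon Act} (hax : ∀ a : Act, Deriv EvAx v (Mon.plus v (Mon.act a v)))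
    (t : List Act) : Deriv EvAx v (Mon.plus v (prefixMon t v)) := by
  induction t with
  | nil => exact (dIdem v).symm
  | cons a t ih =>
    refine (hax a).trans ?_
    refine (Deriv.plus (Deriv.refl v) (Deriv.act a ih)).trans ?_
    refine (Deriv.plus (Deriv.refl v) (dDa a v (prefixMon t v))).trans ?_
    refine (dAssoc v (Mon.act a v) (Mon.act a (prefixMon t v))).trans ?_
    exact Deriv.plus (hax a).symm (Deriv.refl _)

lemma pref_absorb {v : Mon Act} (hax : ∀ a : Act, Deriv EvAx v (Mon.plus v (Mon.act a v)))
    (s t : List Act) :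
    Deriv EvAx (prefixMon s v) (Mon.plus (prefixMon s v) (prefixMon (s ++ t) v)) := by
  refine (prefix_cong s (v_absorb hax t)).trans ?_
  refine (prefix_plus s v (prefixMon t v)).trans ?_
  rw [prefixMon_append]
  exact Deriv.refl _

lemma absorb_mem {l : List (Mon Act)} {y x : Mon Act} (hy : y ∈ l)
    (h : Deriv EvAx y (Mon.plus y x)) :
    Deriv EvAx (sumList l) (Mon.plus (sumList l) x) := by
  induction l with
  | nil => cases hy
  | cons z l ih =>
    rcases List.mem_cons.mp hy with rfl | hy'
    · refine (sum_cons y l).trans ?_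
      refine (Deriv.plus h (Deriv.refl _)).trans ?_
      refine ((dAssoc y x (sumList l)).symm).trans ?_
      refine (Deriv.plus (Deriv.refl y) (dComm x (sumList l))).trans ?_
      refine (dAssoc y (sumList l) x).trans ?_
      exact Deriv.plus (sum_cons y l).symm (Deriv.refl x)
    · refine (sum_cons z l).trans ?_
      refine (Deriv.plus (Deriv.refl z) (ih hy')).trans ?_
      refine (dAssoc z (sumList l) x).trans ?_
      exact Deriv.plus (sum_cons z l).symm (Deriv.refl x)

lemma absorb_all (l₁ : List (Mon Act)) :
    ∀ l₂ : List (Mon Act), (∀ x ∈ l₂, ∃ y ∈ l₁, Deriv EvAx y (Mon.plus y x)) →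
      Deriv EvAx (sumList l₁) (sumList (l₁ ++ l₂)) := by
  have key : ∀ l₂ : List (Mon Act), (∀ x ∈ l₂, ∃ y ∈ l₁, Deriv EvAx y (Mon.plus y x)) →
      Deriv EvAx (sumList l₁) (Mon.plus (sumList l₁) (sumList l₂)) := by
    intro l₂
    induction l₂ with
    | nil => intro _; exact (dUnitR _).symm
    | cons x l ih =>
      intro h
      obtain ⟨y, hy, hd⟩ := h x List.mem_cons_self
      have hstep := absorb_mem hy hd
      have ih' := ih (fun z hz => h z (List.mem_cons_of_mem x hz))
      refine ih'.trans ?_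
      refine (Deriv.plus hstep (Deriv.refl _)).trans ?_
      refine ((dAssoc (sumList l₁) x (sumList l)).symm).trans ?_
      exact Deriv.plus (Deriv.refl _) (sum_cons x l).symm
  intro l₂ h
  exact (key l₂ h).trans (sum_append l₁ l₂).symm

/-! #### Canonical forms -/

/-- The summand corresponding to a (trace, verdict) pair. -/
def canonF (p : List Act × Bool) : Mon Act :=
  prefixMon p.1 (if p.2 then Mon.yes else Mon.no)

/-- Canonical monitor for a list of (trace, verdict) pairs. -/
def canonL (l : List (List Act × Bool)) : Mon Act := sumList (l.map canonF)

lemma mon_normalize : ∀ m : Mon Act, Closed m → ∃ l, Deriv EvAx m (canonL l) := by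
  intro m
  induction m with
  | end_ => intro _; exact ⟨[], Deriv.refl _⟩
  | yes =>
    intro _
    refine ⟨[([], true)], ?_⟩
    show Deriv EvAx Mon.yes (sumList [canonF ([], true)])
    have : canonF (([] : List Act), true) = Mon.yes := by simp [canonF, prefixMon]
    rw [this]
    exact Deriv.refl _
  | no =>
    intro _
    refine ⟨[([], false)], ?_⟩
    show Deriv EvAx Mon.no (sumList [canonF ([], false)])
    have : canonF (([] : List Act), false) = Mon.no := by simp [canonF, prefixMon]
    rw [this]
    exact Deriv.refl _
  | var x => intro hc; simp [Closed] at hc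
  | act a m ih =>
    intro hc
    obtain ⟨l, hl⟩ := ih (by simpa [Closed] using hc)
    refine ⟨l.map (fun p => (a :: p.1, p.2)), ?_⟩
    refine (Deriv.act a hl).trans ?_
    refine (act_sum a (l.map canonF)).trans ?_
    have he : (l.map canonF).map (Mon.act a)
        = (l.map (fun p => (a :: p.1, p.2))).map canonF := by
      simp only [List.map_map]
      rfl
    show Deriv EvAx (sumList ((l.map canonF).map (Mon.act a))) _
    rw [he]
    exact Deriv.refl _
  | plus m n ihm ihn =>
    intro hc
    obtain ⟨l₁, h₁⟩ := ihm hc.1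
    obtain ⟨l₂, h₂⟩ := ihn hc.2
    refine ⟨l₁ ++ l₂, ?_⟩
    refine (Deriv.plus h₁ h₂).trans ?_
    refine (sum_append (l₁.map canonF) (l₂.map canonF)).symm.trans ?_
    show Deriv EvAx (sumList (l₁.map canonF ++ l₂.map canonF)) _
    rw [← List.map_append]
    exact Deriv.refl _

lemma La_canonL (l : List (List Act × Bool)) :
    La (canonL l) = {u | ∃ p ∈ l, p.2 = true ∧ ∃ t, u = p.1 ++ t} := by
  ext u
  rw [show canonL l = sumList (l.map canonF) from rfl, La_sumList]
  simp only [List.mem_map, Set.mem_setOf_eq]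
  constructor
  · rintro ⟨x, ⟨p, hp, rfl⟩, hu⟩
    cases hb : p.2 with
    | true =>
      have hcf : canonF p = prefixMon p.1 Mon.yes := by simp [canonF, hb]
      rw [hcf, La_prefixMon] at hu
      obtain ⟨t, _, rfl⟩ := hu
      exact ⟨p, hp, hb, t, rfl⟩
    | false =>
      have hcf : canonF p = prefixMon p.1 Mon.no := by simp [canonF, hb]
      rw [hcf, La_prefixMon] at hu
      obtain ⟨t, ht, _⟩ := hu
      rw [La_no] at ht
      cases ht
  · rintro ⟨p, hp, hb, t, rfl⟩
    refine ⟨canonF p, ⟨p, hp, rfl⟩, ?_⟩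
    have hcf : canonF p = prefixMon p.1 Mon.yes := by simp [canonF, hb]
    rw [hcf, La_prefixMon]
    exact ⟨t, by rw [La_yes]; trivial, rfl⟩

lemma Lr_canonL (l : List (List Act × Bool)) :
    Lr (canonL l) = {u | ∃ p ∈ l, p.2 = false ∧ ∃ t, u = p.1 ++ t} := by
  ext u
  rw [show canonL l = sumList (l.map canonF) from rfl, Lr_sumList]
  simp only [List.mem_map, Set.mem_setOf_eq]
  constructor
  · rintro ⟨x, ⟨p, hp, rfl⟩, hu⟩
    cases hb : p.2 with
    | false =>
      have hcf : canonF p = prefixMon p.1 Mon.no := by simp [canonF, hb]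
      rw [hcf, Lr_prefixMon] at hu
      obtain ⟨t, _, rfl⟩ := hu
      exact ⟨p, hp, hb, t, rfl⟩
    | true =>
      have hcf : canonF p = prefixMon p.1 Mon.yes := by simp [canonF, hb]
      rw [hcf, Lr_prefixMon] at hu
      obtain ⟨t, ht, _⟩ := hu
      rw [Lr_yes] at ht
      cases ht
  · rintro ⟨p, hp, hb, t, rfl⟩
    refine ⟨canonF p, ⟨p, hp, rfl⟩, ?_⟩
    have hcf : canonF p = prefixMon p.1 Mon.no := by simp [canonF, hb]
    rw [hcf, Lr_prefixMon]
    exact ⟨t, by rw [Lr_no]; trivial, rfl⟩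

lemma canon_absorb_cond (la lb : List (List Act × Bool))
    (hA : La (canonL la) = La (canonL lb)) (hR : Lr (canonL la) = Lr (canonL lb)) :
    ∀ x ∈ lb.map canonF, ∃ y ∈ la.map canonF, Deriv EvAx y (Mon.plus y x) := by
  intro x hx
  obtain ⟨p, hp, rfl⟩ := List.mem_map.mp hx
  cases hb : p.2 with
  | true =>
    have hmem : p.1 ∈ La (canonL lb) := by
      rw [La_canonL]
      exact ⟨p, hp, hb, [], (List.append_nil _).symm⟩
    rw [← hA, La_canonL] at hmem
    obtain ⟨q, hq, hqb, t, hqt⟩ := hmem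
    refine ⟨canonF q, List.mem_map.mpr ⟨q, hq, rfl⟩, ?_⟩
    have e1 : canonF q = prefixMon q.1 Mon.yes := by simp [canonF, hqb]
    have e2 : canonF p = prefixMon p.1 Mon.yes := by simp [canonF, hb]
    rw [e1, e2, hqt]
    exact pref_absorb (fun a => Deriv.ax (EvAx.Ya a)) q.1 t
  | false =>
    have hmem : p.1 ∈ Lr (canonL lb) := by
      rw [Lr_canonL]
      exact ⟨p, hp, hb, [], (List.append_nil _).symm⟩
    rw [← hR, Lr_canonL] at hmem
    obtain ⟨q, hq, hqb, t, hqt⟩ := hmem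
    refine ⟨canonF q, List.mem_map.mpr ⟨q, hq, rfl⟩, ?_⟩
    have e1 : canonF q = prefixMon q.1 Mon.no := by simp [canonF, hqb]
    have e2 : canonF p = prefixMon p.1 Mon.no := by simp [canonF, hb]
    rw [e1, e2, hqt]
    exact pref_absorb (fun a => Deriv.ax (EvAx.Na a)) q.1 t

end Stmt14Aux

/-- ground completeness of `E_v` for verdict equivalence. -/
theorem stmt14 (m n : Mon Act) (hm : Closed m) (hn : Closed n) (h : VerdEq m n) :
    Deriv EvAx m n := by
  obtain ⟨l₁, h₁⟩ := mon_normalize m hm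
  obtain ⟨l₂, h₂⟩ := mon_normalize n hn
  have s₁ := deriv_sound h₁
  have s₂ := deriv_sound h₂
  have hLa : La (canonL l₁) = La (canonL l₂) := by
    rw [← s₁.1, ← s₂.1]; exact h.1
  have hLr : Lr (canonL l₁) = Lr (canonL l₂) := by
    rw [← s₁.2, ← s₂.2]; exact h.2
  have d12 : Deriv EvAx (canonL l₁) (sumList (l₁.map canonF ++ l₂.map canonF)) :=
    absorb_all (l₁.map canonF) (l₂.map canonF) (canon_absorb_cond l₁ l₂ hLa hLr)
  have d21 : Deriv EvAx (canonL l₂) (sumList (l₂.map canonF ++ l₁.map canonF)) :=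
    absorb_all (l₂.map canonF) (l₁.map canonF) (canon_absorb_cond l₂ l₁ hLa.symm hLr.symm)
  have dsw := sum_swap (l₁.map canonF) (l₂.map canonF)
  exact h₁.trans (d12.trans (dsw.trans (d21.symm.trans h₂.symm)))
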